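/- arXiv:1104.4428 — 4 statements merged into one kernel-verified Lean document; each statement's English description precedes it below -/
import Mathlib

section
/- Let S_λ be a weighted shift on a directed tree T = (V,E) with weights {λ_v}_{v∈V°}. Then S_λ is a bounded operator defined on all of ℓ²(V) if and only if α := sup_{u∈V} Σ_{v child of u} |λ_v|² < ∞; moreover, in that case ‖S_λ‖² = α. -/
open scoped ENNReal ComplexConjugate Classical

/-- A directed tree: a connected directed graph with no (directed) circuits in which
every vertex has at most one parent and at most one vertex has no parent (the root). -/
structure DirectedTree (V : Type*) where
  E : V → V → Prop
  parent_unique : ∀ ⦃u₁ u₂ v : V⦄, E u₁ v → E u₂ v → u₁ = u₂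
  no_circuit : ∀ v : V, ¬ Relation.TransGen E v v
  connected : ∀ u v : V, Relation.ReflTransGen (fun a b => E a b ∨ E b a) u v
  root_unique : ∀ ⦃r₁ r₂ : V⦄, (∀ u, ¬ E u r₁) → (∀ u, ¬ E u r₂) → r₁ = r₂

namespace DirectedTree

variable {V : Type*} (T : DirectedTree V)

/-- `v ∈ V°`, i.e. `v` is not a root. -/
def HasParent (v : V) : Prop := ∃ u, T.E u v

/-- The parent partial map (junk value `v` itself at a root). -/
noncomputable def par (v : V) : V := if h : T.HasParent v then h.choose else v

theorem par_spec {v : V} (h : T.HasParent v) : T.E (T.par v) v := by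
  rw [par, dif_pos h]; exact h.choose_spec

/-- the child set of a vertex -/
def chi (u : V) : Set V := {v | T.E u v}

/-- the child set of a set of vertices -/
def chiSet (W : Set V) : Set V := {v | ∃ u ∈ W, T.E u v}

/-- the iterated child set `Chi^n(u)` -/
def chiN (n : ℕ) (u : V) : Set V := (T.chiSet)^[n] {u}

/-- the set of descendants of a vertex -/
def des (u : V) : Set V := ⋃ n : ℕ, T.chiN n u

/-- the iterated parent partial map, as an `Option`-valued map -/
noncomputable def parN : ℕ → V → Option V
  | 0, v => some v
  | n + 1, v => if T.HasParent v then parN n (T.par v) else none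

end DirectedTree

/-- the Hilbert space `ℓ²(V)` -/
abbrev l2 (V : Type*) : Type _ := lp (fun _ : V => ℂ) 2

/-- the canonical orthonormal basis vector `e_u` of `ℓ²(V)` -/
noncomputable def evec {V : Type*} (u : V) : l2 V := lp.single 2 u 1

variable {V : Type*}

/-- the formal action `Λ_T` of a weighted shift with weights `lam` -/
noncomputable def lamMap (T : DirectedTree V) (lam : V → ℂ) (f : V → ℂ) : V → ℂ :=
  fun v => if T.HasParent v then lam v * f (T.par v) else 0

theorem lamMap_add (T : DirectedTree V) (lam : V → ℂ) (f g : V → ℂ) :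
    lamMap T lam (f + g) = lamMap T lam f + lamMap T lam g := by
  funext v
  simp only [lamMap, Pi.add_apply]
  split_ifs <;> ring

theorem lamMap_smul (T : DirectedTree V) (lam : V → ℂ) (c : ℂ) (f : V → ℂ) :
    lamMap T lam (c • f) = c • lamMap T lam f := by
  funext v
  simp only [lamMap, Pi.smul_apply, smul_eq_mul]
  split_ifs <;> ring

/-- the (maximal) domain of the weighted shift `S_lam` -/
noncomputable def shiftDomain (T : DirectedTree V) (lam : V → ℂ) : Submodule ℂ (l2 V) where
  carrier := {f : l2 V | Memℓp (lamMap T lam ⇑f) 2}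
  zero_mem' := by
    have : lamMap T lam ⇑(0 : l2 V) = 0 := by
      funext v; simp [lamMap]
    simp only [Set.mem_setOf_eq, this]
    exact zero_memℓp
  add_mem' := by
    intro f g hf hg
    have h : lamMap T lam ⇑(f + g) = lamMap T lam ⇑f + lamMap T lam ⇑g := by
      rw [lp.coeFn_add]; exact lamMap_add T lam _ _
    simp only [Set.mem_setOf_eq, h]
    exact hf.add hg
  smul_mem' := by
    intro c f hf
    have h : lamMap T lam ⇑(c • f) = c • lamMap T lam ⇑f := by
      rw [lp.coeFn_smul]; exact lamMap_smul T lam _ _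
    simp only [Set.mem_setOf_eq, h]
    exact hf.const_smul c

/-- the weighted shift `S_lam` on the directed tree `T`, as an unbounded operator in `ℓ²(V)` -/
noncomputable def shift (T : DirectedTree V) (lam : V → ℂ) : l2 V →ₗ.[ℂ] l2 V where
  domain := shiftDomain T lam
  toFun :=
    { toFun := fun f => ⟨lamMap T lam ⇑(f : l2 V), f.2⟩
      map_add' := by
        intro f g
        apply Subtype.ext
        exact lamMap_add T lam _ _
      map_smul' := by
        intro c f
        apply Subtype.ext
        exact lamMap_smul T lam _ _ }

section Helpers

open scoped NNReal

variable {V : Type*}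

noncomputable def esq {V : Type*} (f : V → ℂ) : ℝ≥0∞ := ∑' v, (‖f v‖₊ : ℝ≥0∞) ^ 2

lemma esq_eq_coe (f : V → ℂ) : esq f = ∑' v, ((‖f v‖₊ ^ 2 : ℝ≥0) : ℝ≥0∞) := by
  simp [esq, ENNReal.coe_pow]

lemma memℓp_two_iff (f : V → ℂ) : Memℓp f 2 ↔ esq f ≠ ⊤ := by
  have h2 : (0:ℝ) < (2:ℝ≥0∞).toReal := by norm_num
  rw [memℓp_gen_iff h2, esq_eq_coe, ENNReal.tsum_coe_ne_top_iff_summable]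
  have : (fun v => ‖f v‖ ^ (2:ℝ≥0∞).toReal) = fun v => ((‖f v‖₊ ^ 2 : ℝ≥0) : ℝ) := by
    funext v
    rw [show ((2:ℝ≥0∞).toReal) = ((2:ℕ):ℝ) by norm_num, Real.rpow_natCast]
    push_cast
    rfl
  rw [this, NNReal.summable_coe]

lemma l2_norm_sq (f : lp (fun _ : V => ℂ) 2) : ‖f‖ ^ 2 = (esq ⇑f).toReal := by
  have h2 : (0:ℝ) < (2:ℝ≥0∞).toReal := by norm_num
  have h := lp.norm_rpow_eq_tsum h2 f
  rw [esq, ENNReal.tsum_toReal_eq (fun v => by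
    exact ENNReal.pow_ne_top ENNReal.coe_ne_top)]
  have h3 : ((2:ℝ≥0∞).toReal) = ((2:ℕ):ℝ) := by norm_num
  rw [h3, Real.rpow_natCast] at h
  simp only [h3, Real.rpow_natCast] at h
  rw [h]
  exact tsum_congr fun v => by simp [ENNReal.toReal_pow]

/-- The equivalence between `Σ u, chi u` and the set of non-root vertices. -/
noncomputable def childEquiv (T : DirectedTree V) :
    (Σ u : V, T.chi u) ≃ {v : V // T.HasParent v} := by
  refine Equiv.ofBijective (fun p => ⟨(p.2 : V), ⟨p.1, p.2.2⟩⟩) ⟨?_, ?_⟩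
  · rintro ⟨u₁, v₁, h₁⟩ ⟨u₂, v₂, h₂⟩ h
    have hv : (v₁ : V) = (v₂ : V) := congrArg Subtype.val h
    have hu : u₁ = u₂ := T.parent_unique (hv ▸ h₁) h₂
    subst hu
    simp only [Sigma.mk.inj_iff, heq_eq_eq]
    exact ⟨trivial, Subtype.ext hv⟩
  · rintro ⟨v, u, hu⟩
    exact ⟨⟨u, ⟨v, hu⟩⟩, rfl⟩

lemma par_eq {V : Type*} (T : DirectedTree V) {u v : V} (h : T.E u v) : T.par v = u :=
  T.parent_unique (T.par_spec ⟨u, h⟩) h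

/-- Key computation: grouping the squared norms by parent. -/
lemma esq_lamMap (T : DirectedTree V) (lam : V → ℂ) (f : V → ℂ) :
    esq (lamMap T lam f) =
      ∑' u : V, (‖f u‖₊ : ℝ≥0∞) ^ 2 * ∑' v : T.chi u, (‖lam (v : V)‖₊ : ℝ≥0∞) ^ 2 := by
  set g : V → ℝ≥0∞ := fun v => (‖lamMap T lam f v‖₊ : ℝ≥0∞) ^ 2 with hg
  have step1 : ∀ u : V, (‖f u‖₊ : ℝ≥0∞) ^ 2 * ∑' v : T.chi u, (‖lam (v : V)‖₊ : ℝ≥0∞) ^ 2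
      = ∑' v : T.chi u, g (v : V) := by
    intro u
    rw [← ENNReal.tsum_mul_left]
    congr 1
    funext v
    have hv : T.E u (v : V) := v.2
    have hp : T.HasParent (v : V) := ⟨u, hv⟩
    simp only [hg, lamMap, if_pos hp, par_eq T hv]
    rw [nnnorm_mul]
    push_cast
    ring
  simp only [step1]
  have step2 : ∑' u : V, ∑' v : T.chi u, g (v : V)
      = ∑' v : {v : V // T.HasParent v}, g (v : V) := by
    rw [← ENNReal.tsum_sigma (fun u (v : T.chi u) => g (v : V))]
    exact (childEquiv T).tsum_eq (fun v => g (v : V))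
  rw [step2]
  symm
  show ∑' v : {v : V // T.HasParent v}, g (v : V) = ∑' v, g v
  apply tsum_subtype_eq_of_support_subset
  intro v hv
  by_contra hcon
  simp only [hg, Function.mem_support, ne_eq] at hv
  have hnp : ¬ T.HasParent v := hcon
  apply hv
  simp [lamMap, hnp]

end Helpers


section MainHelpers

variable {V : Type*} (T : DirectedTree V) (lam : V → ℂ)

lemma mem_domain_iff (f : l2 V) :
    f ∈ (shift T lam).domain ↔ esq (lamMap T lam ⇑f) ≠ ⊤ :=
  memℓp_two_iff _

lemma shift_norm_sq (f : (shift T lam).domain) :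
    ‖shift T lam f‖ ^ 2 = (esq (lamMap T lam ⇑(f : l2 V))).toReal := by
  have h : ⇑(shift T lam f) = lamMap T lam ⇑(f : l2 V) := rfl
  rw [← h]
  exact l2_norm_sq _

lemma esq_lamMap_evec (u : V) :
    esq (lamMap T lam ⇑(evec u : l2 V)) =
      ∑' v : T.chi u, (‖lam (v : V)‖₊ : ℝ≥0∞) ^ 2 := by
  rw [esq_lamMap]
  rw [tsum_eq_single u]
  · have h1 : (evec u : l2 V) u = 1 := lp.single_apply_self 2 u 1
    simp [h1]
  · intro w hw
    have h0 : (evec u : l2 V) w = 0 := lp.single_apply_ne 2 u 1 hw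
    simp [h0]

lemma norm_evec (u : V) : ‖(evec u : l2 V)‖ = 1 := by
  have h := lp.norm_single (p := 2) (E := fun _ : V => ℂ) (by norm_num) u (1 : ℂ)
  simpa [evec] using h

end MainHelpers

/-- A densely defined operator `A` is formally normal if `dom A ⊆ dom A*` and
`‖A* h‖ = ‖A h‖` for all `h ∈ dom A`. -/
def FormallyNormal {H : Type*} [NormedAddCommGroup H] [InnerProductSpace ℂ H]
    [CompleteSpace H] (A : H →ₗ.[ℂ] H) : Prop :=
  Dense (A.domain : Set H) ∧ A.domain ≤ A.adjoint.domain ∧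
    ∀ (f : H) (hf : f ∈ A.domain) (hf' : f ∈ A.adjoint.domain),
      ‖A.adjoint ⟨f, hf'⟩‖ = ‖A ⟨f, hf⟩‖

/-- A densely defined operator `A` is normal if `dom A = dom A*` and
`‖A* h‖ = ‖A h‖` for all `h ∈ dom A` (such an operator is automatically closed). -/
def IsNormalOp {H : Type*} [NormedAddCommGroup H] [InnerProductSpace ℂ H]
    [CompleteSpace H] (A : H →ₗ.[ℂ] H) : Prop :=
  Dense (A.domain : Set H) ∧ A.domain = A.adjoint.domain ∧
    ∀ (f : H) (hf : f ∈ A.domain) (hf' : f ∈ A.adjoint.domain),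
      ‖A.adjoint ⟨f, hf'⟩‖ = ‖A ⟨f, hf⟩‖

/-- `S_λ` is a bounded operator defined on all of `ℓ²(V)` iff
`α = sup_u ∑_{v ∈ Chi(u)} |λ_v|² < ∞`, and in that case `‖S_λ‖² = α`. -/
theorem shift_bounded_iff {V : Type*} (T : DirectedTree V) (lam : V → ℂ) :
    (((shift T lam).domain = ⊤ ∧
        ∃ C : ℝ, ∀ f : (shift T lam).domain, ‖shift T lam f‖ ≤ C * ‖(f : l2 V)‖) ↔
      (⨆ u : V, ∑' v : T.chi u, (‖lam (v : V)‖₊ : ℝ≥0∞) ^ 2) < ⊤) ∧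
    ((⨆ u : V, ∑' v : T.chi u, (‖lam (v : V)‖₊ : ℝ≥0∞) ^ 2) < ⊤ →
      sInf {C : ℝ | 0 ≤ C ∧
          ∀ f : (shift T lam).domain, ‖shift T lam f‖ ≤ C * ‖(f : l2 V)‖} ^ 2 =
        (⨆ u : V, ∑' v : T.chi u, (‖lam (v : V)‖₊ : ℝ≥0∞) ^ 2).toReal) := by
  set S : V → ℝ≥0∞ := fun u => ∑' v : T.chi u, (‖lam (v : V)‖₊ : ℝ≥0∞) ^ 2 with hS
  set A : ℝ≥0∞ := ⨆ u : V, S u with hA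
  -- per-vertex estimate from a bound C
  have hpoint : ∀ (C : ℝ),
      (∀ f : (shift T lam).domain, ‖shift T lam f‖ ≤ C * ‖(f : l2 V)‖) →
      ∀ u : V, evec u ∈ (shift T lam).domain → S u ≤ ENNReal.ofReal (C ^ 2) := by
    intro C hC u hu
    have h1 : ‖shift T lam ⟨evec u, hu⟩‖ ≤ C := by
      have := hC ⟨evec u, hu⟩
      rwa [norm_evec, mul_one] at this
    have hne : S u ≠ ⊤ := by
      have := (mem_domain_iff T lam (evec u)).1 hu
      rwa [esq_lamMap_evec] at this
    have htr : (S u).toReal ≤ C ^ 2 := by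
      have h2 : (S u).toReal = ‖shift T lam ⟨evec u, hu⟩‖ ^ 2 := by
        rw [shift_norm_sq, esq_lamMap_evec]
      rw [h2]
      exact pow_le_pow_left₀ (norm_nonneg _) h1 2
    exact (ENNReal.le_ofReal_iff_toReal_le hne (sq_nonneg C)).2 htr
  -- the upper estimate from A
  have hesq_le : ∀ f : l2 V, esq (lamMap T lam ⇑f) ≤ A * esq ⇑f := by
    intro f
    rw [esq_lamMap]
    calc ∑' u : V, (‖f u‖₊ : ℝ≥0∞) ^ 2 * S u
        ≤ ∑' u : V, (‖f u‖₊ : ℝ≥0∞) ^ 2 * A :=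
          ENNReal.tsum_le_tsum fun u => mul_le_mul_right (le_iSup S u) _
      _ = A * esq ⇑f := by rw [ENNReal.tsum_mul_right, esq, mul_comm]
  have hesqf : ∀ f : l2 V, esq ⇑f ≠ ⊤ := fun f => (memℓp_two_iff _).1 (lp.memℓp f)
  -- under A < ⊤ : domain = ⊤ and the sqrt bound
  have hdom : A < ⊤ → (shift T lam).domain = ⊤ := by
    intro hAlt
    rw [Submodule.eq_top_iff']
    intro f
    rw [mem_domain_iff]
    exact ne_top_of_le_ne_top (ENNReal.mul_lt_top hAlt
      (lt_top_iff_ne_top.2 (hesqf f))).ne (hesq_le f)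
  have hbound : A < ⊤ → ∀ f : (shift T lam).domain,
      ‖shift T lam f‖ ≤ Real.sqrt A.toReal * ‖(f : l2 V)‖ := by
    intro hAlt f
    have hsq : ‖shift T lam f‖ ^ 2 ≤ (Real.sqrt A.toReal * ‖(f : l2 V)‖) ^ 2 := by
      rw [mul_pow, Real.sq_sqrt ENNReal.toReal_nonneg]
      rw [shift_norm_sq]
      have h1 : (esq (lamMap T lam ⇑(f : l2 V))).toReal ≤ (A * esq ⇑(f : l2 V)).toReal :=
        ENNReal.toReal_mono (ENNReal.mul_lt_top hAlt
          (lt_top_iff_ne_top.2 (hesqf (f : l2 V)))).ne (hesq_le (f : l2 V))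
      rw [ENNReal.toReal_mul, ← l2_norm_sq] at h1
      exact h1
    exact (pow_le_pow_iff_left₀ (norm_nonneg _)
      (mul_nonneg (Real.sqrt_nonneg _) (norm_nonneg _)) two_ne_zero).1 hsq
  have hevec_mem : A < ⊤ → ∀ u : V, evec u ∈ (shift T lam).domain := by
    intro hAlt u
    rw [mem_domain_iff, esq_lamMap_evec]
    exact ((le_iSup S u).trans_lt hAlt).ne
  constructor
  · constructor
    · rintro ⟨hd, C, hC⟩
      have hmem : ∀ u, evec u ∈ (shift T lam).domain := fun u => by
        rw [hd]; trivial
      calc A ≤ ENNReal.ofReal (C ^ 2) := iSup_le fun u => hpoint C hC u (hmem u)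
        _ < ⊤ := ENNReal.ofReal_lt_top
    · intro hAlt
      exact ⟨hdom hAlt, Real.sqrt A.toReal, hbound hAlt⟩
  · intro hAlt
    set a : ℝ := Real.sqrt A.toReal with ha
    have haM : a ∈ {C : ℝ | 0 ≤ C ∧
        ∀ f : (shift T lam).domain, ‖shift T lam f‖ ≤ C * ‖(f : l2 V)‖} :=
      ⟨Real.sqrt_nonneg _, hbound hAlt⟩
    have hlb : ∀ C ∈ {C : ℝ | 0 ≤ C ∧
        ∀ f : (shift T lam).domain, ‖shift T lam f‖ ≤ C * ‖(f : l2 V)‖}, a ≤ C := by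
      rintro C ⟨hC0, hC⟩
      have h1 : A ≤ ENNReal.ofReal (C ^ 2) :=
        iSup_le fun u => hpoint C hC u (hevec_mem hAlt u)
      have h2 : A.toReal ≤ C ^ 2 := by
        have := ENNReal.toReal_mono ENNReal.ofReal_ne_top h1
        rwa [ENNReal.toReal_ofReal (sq_nonneg C)] at this
      calc a ≤ Real.sqrt (C ^ 2) := Real.sqrt_le_sqrt h2
        _ = C := by rw [Real.sqrt_sq hC0]
    have hsInf : sInf {C : ℝ | 0 ≤ C ∧
        ∀ f : (shift T lam).domain, ‖shift T lam f‖ ≤ C * ‖(f : l2 V)‖} = a :=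
      le_antisymm (csInf_le ⟨0, fun x hx => hx.1⟩ haM) (le_csInf ⟨a, haM⟩ hlb)
    rw [hsInf, ha, Real.sq_sqrt ENNReal.toReal_nonneg]
end

section
/- Let S_λ be a nonzero weighted shift on a directed tree T = (V,E) with weights {λ_v}_{v∈V°}. Suppose there exists a two-sided sequence {u_n}_{n∈ℤ} ⊆ V with u_{n-1} = parent(u_n) and |λ_{u_{n-1}}| = |λ_{u_n}| for all n ∈ ℤ, and λ_v = 0 for all v ∈ V \ {u_n : n ∈ ℤ}. Then S_λ is a bounded normal operator on ℓ²(V). -/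
open scoped ENNReal ComplexConjugate Classical

variable {V : Type*}

section AuxWOp

variable {V : Type*}

private lemma two_toReal_pos : (0:ℝ) < (2 : ℝ≥0∞).toReal := by norm_num

private lemma summable_comp_sq (f : l2 V) (p : V → V) (hp : Function.Injective p) :
    Summable fun v => ‖f (p v)‖ ^ (2 : ℝ≥0∞).toReal :=
  ((lp.memℓp f).summable two_toReal_pos).comp_injective hp

private lemma wop_pointwise {w : V → ℂ} {p : V → V} {c : ℝ}
    (hw : ∀ v, ‖w v‖ ≤ c) (f : l2 V) (v : V) :
    ‖w v * f (p v)‖ ^ (2 : ℝ≥0∞).toReal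
      ≤ c ^ (2 : ℝ≥0∞).toReal * ‖f (p v)‖ ^ (2 : ℝ≥0∞).toReal := by
  have hc0 : 0 ≤ c := le_trans (norm_nonneg _) (hw v)
  rw [← Real.mul_rpow hc0 (norm_nonneg _)]
  refine Real.rpow_le_rpow (norm_nonneg _) ?_ (le_of_lt two_toReal_pos)
  rw [norm_mul]
  exact mul_le_mul_of_nonneg_right (hw v) (norm_nonneg _)

private lemma wop_mem (w : V → ℂ) (p : V → V) (hp : Function.Injective p)
    {c : ℝ} (hw : ∀ v, ‖w v‖ ≤ c) (f : l2 V) :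
    Memℓp (fun v => w v * f (p v)) 2 := by
  apply memℓp_gen
  exact Summable.of_nonneg_of_le (fun v => by positivity)
    (fun v => wop_pointwise hw f v)
    ((summable_comp_sq f p hp).mul_left _)

private lemma wop_norm_le (w : V → ℂ) (p : V → V) (hp : Function.Injective p)
    {c : ℝ} (hc : 0 ≤ c) (hw : ∀ v, ‖w v‖ ≤ c) (f : l2 V) :
    ‖(⟨fun v => w v * f (p v), wop_mem w p hp hw f⟩ : lp (fun _ : V => ℂ) 2)‖
      ≤ c * ‖f‖ := by
  have ht := two_toReal_pos
  rw [← Real.rpow_le_rpow_iff (norm_nonneg _) (by positivity) ht]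
  rw [lp.norm_rpow_eq_tsum ht]
  have hco : ∀ v : V,
      (⟨fun v => w v * f (p v), wop_mem w p hp hw f⟩ : lp (fun _ : V => ℂ) 2) v
        = w v * f (p v) := fun v => rfl
  calc ∑' v, ‖(⟨fun v => w v * f (p v), wop_mem w p hp hw f⟩ :
          lp (fun _ : V => ℂ) 2) v‖ ^ (2 : ℝ≥0∞).toReal
      ≤ ∑' v, c ^ (2 : ℝ≥0∞).toReal * ‖f (p v)‖ ^ (2 : ℝ≥0∞).toReal := by
        refine Summable.tsum_le_tsum (fun v => ?_) ?_ ?_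
        · rw [hco]; exact wop_pointwise hw f v
        · simpa [hco] using (wop_mem w p hp hw f).summable ht
        · exact (summable_comp_sq f p hp).mul_left _
    _ = c ^ (2 : ℝ≥0∞).toReal * ∑' v, ‖f (p v)‖ ^ (2 : ℝ≥0∞).toReal := tsum_mul_left
    _ ≤ c ^ (2 : ℝ≥0∞).toReal * ∑' v, ‖f v‖ ^ (2 : ℝ≥0∞).toReal := by
        refine mul_le_mul_of_nonneg_left ?_ (by positivity)
        exact Summable.tsum_le_tsum_of_inj p hp (fun v _ => by positivity)
          (fun v => le_rfl) (summable_comp_sq f p hp)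
          ((lp.memℓp f).summable ht)
    _ = (c * ‖f‖) ^ (2 : ℝ≥0∞).toReal := by
        rw [← lp.norm_rpow_eq_tsum ht, Real.mul_rpow hc (norm_nonneg _)]

/-- the bounded operator `f ↦ (v ↦ w v * f (p v))` on `ℓ²(V)` -/
noncomputable def wop (w : V → ℂ) (p : V → V) (hp : Function.Injective p)
    {c : ℝ} (hc : 0 ≤ c) (hw : ∀ v, ‖w v‖ ≤ c) : l2 V →L[ℂ] l2 V :=
  LinearMap.mkContinuous
    { toFun := fun f => (⟨fun v => w v * f (p v), wop_mem w p hp hw f⟩ :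
        lp (fun _ : V => ℂ) 2)
      map_add' := fun f g => lp.ext (by
        funext v
        simp only [lp.coeFn_add, Pi.add_apply]
        change w v * (f + g) (p v) = w v * f (p v) + w v * g (p v)
        rw [lp.coeFn_add]
        simp only [Pi.add_apply]
        ring)
      map_smul' := fun a f => lp.ext (by
        funext v
        simp only [RingHom.id_apply, lp.coeFn_smul, Pi.smul_apply]
        change w v * (a • f) (p v) = a • (w v * f (p v))
        rw [lp.coeFn_smul]
        simp only [Pi.smul_apply, smul_eq_mul]
        ring) }
    c (fun f => wop_norm_le w p hp hc hw f)

lemma wop_apply (w : V → ℂ) (p : V → V) (hp : Function.Injective p)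
    {c : ℝ} (hc : 0 ≤ c) (hw : ∀ v, ‖w v‖ ≤ c) (f : l2 V) (v : V) :
    (wop w p hp hc hw f) v = w v * f (p v) := rfl

/-- the shifted reindexing map along a two-sided path -/
noncomputable def pmap (u : ℤ → V) (d : ℤ) : V → V :=
  fun v => if h : ∃ n, v = u n then u (h.choose + d) else v

lemma pmap_on {u : ℤ → V} (hu : Function.Injective u) (n d : ℤ) :
    pmap u d (u n) = u (n + d) := by
  have hex : ∃ m, u n = u m := ⟨n, rfl⟩
  rw [pmap, dif_pos hex, ← hu hex.choose_spec]

lemma pmap_off {u : ℤ → V} {v : V} (h : ∀ n, v ≠ u n) (d : ℤ) :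
    pmap u d v = v := dif_neg (by simpa using h)

lemma pmap_inj {u : ℤ → V} (hu : Function.Injective u) (d : ℤ) :
    Function.Injective (pmap u d) := by
  intro a b hab
  by_cases ha : ∃ n, a = u n <;> by_cases hb : ∃ n, b = u n
  · obtain ⟨m, rfl⟩ := ha; obtain ⟨n, rfl⟩ := hb
    rw [pmap_on hu, pmap_on hu] at hab
    have h1 : m + d = n + d := hu hab
    have h2 : m = n := by omega
    rw [h2]
  · obtain ⟨m, rfl⟩ := ha
    push_neg at hb
    rw [pmap_on hu, pmap_off hb] at hab
    exact absurd hab.symm (hb _)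
  · obtain ⟨n, rfl⟩ := hb
    push_neg at ha
    rw [pmap_on hu, pmap_off ha] at hab
    exact absurd hab (ha _)
  · push_neg at ha; push_neg at hb
    rwa [pmap_off ha, pmap_off hb] at hab

end AuxWOp


section AuxWconj

variable {V : Type*}

/-- the conjugate weight function along a two-sided path -/
noncomputable def wconj (lam : V → ℂ) (u : ℤ → V) : V → ℂ :=
  fun v => if h : ∃ n, v = u n then conj (lam (u (h.choose + 1))) else 0

lemma wconj_on {lam : V → ℂ} {u : ℤ → V} (hu : Function.Injective u) (n : ℤ) :
    wconj lam u (u n) = conj (lam (u (n + 1))) := by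
  have hex : ∃ m, u n = u m := ⟨n, rfl⟩
  rw [wconj, dif_pos hex, ← hu hex.choose_spec]

lemma wconj_off {lam : V → ℂ} {u : ℤ → V} {v : V} (h : ∀ n, v ≠ u n) :
    wconj lam u v = 0 := dif_neg (by simpa using h)

end AuxWconj


/-- if the weights of a nonzero weighted shift are supported on a two-sided
path with constant modulus, then `S_λ` is a bounded normal operator on `ℓ²(V)`. -/
theorem shift_normal_of_path_weights {V : Type*} (T : DirectedTree V) (lam : V → ℂ)
    (hnz : ∃ f : (shift T lam).domain, shift T lam f ≠ 0)
    (u : ℤ → V)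
    (hedge : ∀ n : ℤ, T.E (u (n - 1)) (u n))
    (habs : ∀ n : ℤ, ‖lam (u (n - 1))‖ = ‖lam (u n)‖)
    (hzero : ∀ v : V, (∀ n : ℤ, v ≠ u n) → lam v = 0) :
    (shift T lam).domain = ⊤ ∧
    ∃ N : l2 V →L[ℂ] l2 V,
      (∀ f : (shift T lam).domain, N (f : l2 V) = shift T lam f) ∧ IsStarNormal N := by
  classical
  -- injectivity of the path
  have hchain : ∀ m n : ℤ, m < n → Relation.TransGen T.E (u m) (u n) := by
    intro m n hmn
    have key : ∀ k : ℕ, Relation.TransGen T.E (u m) (u (m + 1 + k)) := by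
      intro k
      induction k with
      | zero =>
        refine Relation.TransGen.single ?_
        have h := hedge (m + 1)
        have e1 : (m + 1 : ℤ) - 1 = m := by ring
        rw [e1] at h
        simpa using h
      | succ k ih =>
        refine ih.tail ?_
        have h := hedge (m + 1 + k + 1)
        have e1 : (m + 1 + (k : ℤ) + 1) - 1 = m + 1 + k := by ring
        rw [e1] at h
        have e2 : m + 1 + ((k : ℕ) : ℤ) + 1 = m + 1 + (((k + 1 : ℕ)) : ℤ) := by
          push_cast; ring
        rwa [e2] at h
    have hkey := key (n - (m + 1)).toNat
    rwa [show m + 1 + (((n - (m + 1)).toNat : ℕ) : ℤ) = n by omega] at hkey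
  have hu_inj : Function.Injective u := by
    intro m n hmn
    by_contra hne
    rcases lt_or_gt_of_ne hne with h | h
    · have := hchain m n h
      rw [hmn] at this
      exact T.no_circuit _ this
    · have := hchain n m h
      rw [hmn] at this
      exact T.no_circuit _ this
  have hparent : ∀ n : ℤ, T.HasParent (u n) := fun n => ⟨_, hedge n⟩
  have hpar : ∀ n : ℤ, T.par (u n) = u (n - 1) :=
    fun n => T.parent_unique (T.par_spec (hparent n)) (hedge n)
  -- the constant modulus
  set c : ℝ := ‖lam (u 0)‖ with hcdef
  have hc0 : 0 ≤ c := norm_nonneg _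
  have hcn : ∀ n : ℤ, ‖lam (u n)‖ = c := by
    intro n
    induction n using Int.induction_on with
    | zero => rfl
    | succ n ih =>
      have h1 : ((n : ℤ) + 1) - 1 = (n : ℤ) := by ring
      have h2 := habs ((n : ℤ) + 1)
      rw [h1] at h2
      rw [← h2]; exact ih
    | pred n ih =>
      have h2 := habs (-(n : ℤ))
      exact h2.trans ih
  have hw : ∀ v, ‖lam v‖ ≤ c := by
    intro v
    by_cases h : ∃ n, v = u n
    · obtain ⟨n, rfl⟩ := h
      rw [hcn n]
    · push_neg at h
      rw [hzero v h]
      simpa using hc0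
  have hw2 : ∀ v, ‖wconj lam u v‖ ≤ c := by
    intro v
    by_cases h : ∃ n, v = u n
    · obtain ⟨n, rfl⟩ := h
      rw [wconj_on hu_inj, RCLike.norm_conj, hcn]
    · push_neg at h
      rw [wconj_off h]
      simpa using hc0
  -- index maps
  have hpm1 : ∀ n : ℤ, pmap u (-1) (u n) = u (n - 1) := by
    intro n
    rw [pmap_on hu_inj, Int.add_neg_one]
  have hpp1 : ∀ n : ℤ, pmap u 1 (u n) = u (n + 1) := fun n => pmap_on hu_inj n 1
  -- the two bounded operators
  set N : l2 V →L[ℂ] l2 V := wop lam (pmap u (-1)) (pmap_inj hu_inj _) hc0 hw with hNdef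
  set M : l2 V →L[ℂ] l2 V :=
    wop (wconj lam u) (pmap u 1) (pmap_inj hu_inj _) hc0 hw2 with hMdef
  -- coordinate formula for the formal shift
  have hcoord : ∀ (f : V → ℂ) (v : V),
      lamMap T lam f v = lam v * f (pmap u (-1) v) := by
    intro f v
    by_cases h : ∃ n, v = u n
    · obtain ⟨n, rfl⟩ := h
      rw [lamMap]
      simp only [if_pos (hparent n)]
      rw [hpar n, hpm1 n]
    · push_neg at h
      rw [lamMap, hzero v h]
      split_ifs <;> simp
  have hdom : (shift T lam).domain = ⊤ := by
    rw [eq_top_iff]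
    intro f _
    show Memℓp (lamMap T lam ⇑f) 2
    have : lamMap T lam ⇑f = fun v => lam v * f (pmap u (-1) v) := funext (hcoord ⇑f)
    rw [this]
    exact wop_mem _ _ (pmap_inj hu_inj _) hw f
  refine ⟨hdom, N, ?_, ?_⟩
  · intro f
    refine lp.ext (funext fun v => ?_)
    exact (hcoord (⇑(f : l2 V)) v).symm
  · -- M is the adjoint of N
    have hadj : M = ContinuousLinearMap.adjoint N := by
      rw [ContinuousLinearMap.eq_adjoint_iff]
      intro x y
      rw [lp.inner_eq_tsum, lp.inner_eq_tsum]
      simp only [RCLike.inner_apply, hMdef, hNdef, wop_apply]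
      have hL : (Function.support fun v => y v * conj (wconj lam u v * x (pmap u 1 v)))
          ⊆ Set.range u := by
        intro v hv
        by_contra hc
        apply hv
        have h : ∀ n, v ≠ u n := by
          intro n hn
          exact hc ⟨n, hn.symm⟩
        simp [wconj_off h]
      have hR : (Function.support fun v => lam v * y (pmap u (-1) v) * conj (x v))
          ⊆ Set.range u := by
        intro v hv
        by_contra hc
        apply hv
        have h : ∀ n, v ≠ u n := by
          intro n hn
          exact hc ⟨n, hn.symm⟩
        simp [hzero v h]
      rw [← hu_inj.tsum_eq hL, ← hu_inj.tsum_eq hR]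
      rw [← (Equiv.addRight (1 : ℤ)).tsum_eq
        (fun n => lam (u n) * y (pmap u (-1) (u n)) * conj (x (u n)))]
      refine tsum_congr fun n => ?_
      simp only [Equiv.coe_addRight]
      rw [wconj_on hu_inj, hpp1, hpm1 (n + 1)]
      rw [show (n + 1 - 1 : ℤ) = n by ring]
      rw [map_mul, Complex.conj_conj]
      ring
    have hstar : star N = M := by
      rw [ContinuousLinearMap.star_eq_adjoint, ← hadj]
    refine ⟨?_⟩
    rw [commute_iff_eq, hstar]
    refine ContinuousLinearMap.ext fun f => lp.ext (funext fun v => ?_)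
    have hMN : ((M * N) f) v
        = wconj lam u v * (lam (pmap u 1 v) * f (pmap u (-1) (pmap u 1 v))) := rfl
    have hNM : ((N * M) f) v
        = lam v * (wconj lam u (pmap u (-1) v) * f (pmap u 1 (pmap u (-1) v))) := rfl
    rw [hMN, hNM]
    by_cases h : ∃ n, v = u n
    · obtain ⟨n, rfl⟩ := h
      rw [hpp1 n, hpm1 (n + 1), hpm1 n, hpp1 (n - 1), wconj_on hu_inj n,
        wconj_on hu_inj (n - 1)]
      rw [show (n + 1 - 1 : ℤ) = n by ring, show (n - 1 + 1 : ℤ) = n by ring]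
      have key : ∀ z w : ℂ, ‖z‖ = ‖w‖ → conj z * z = conj w * w := by
        intro z w hzw
        rw [mul_comm, Complex.mul_conj, mul_comm, Complex.mul_conj]
        norm_cast
        rw [Complex.normSq_eq_norm_sq, Complex.normSq_eq_norm_sq, hzw]
      have hk := key (lam (u (n + 1))) (lam (u n)) (by rw [hcn, hcn])
      calc conj (lam (u (n + 1))) * (lam (u (n + 1)) * f (u n))
          = (conj (lam (u (n + 1))) * lam (u (n + 1))) * f (u n) := by ring
        _ = (conj (lam (u n)) * lam (u n)) * f (u n) := by rw [hk]
        _ = lam (u n) * (conj (lam (u n)) * f (u n)) := by ring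
    · push_neg at h
      rw [wconj_off h, hzero v h]
      ring_nf
end

section
/- Let S_λ be a nonzero subnormal weighted shift on the directed tree ℤ₊ with nonzero weights, which admits a normal extension N that is a weighted shift on some directed tree, with N = U ⊕ 0 for U unitary (unitarily equivalent to the bilateral shift). Then S_λ restricted to the closure of its range is an isometry, |λ_n| = 1 for all n ≥ 2, and |λ_1| ≤ 1; hence S_λ is unitarily equivalent to the unilateral weighted shift on ℓ²(ℤ₊) with weight sequence (ϑ, 1, 1, 1, …) for some ϑ ∈ (0,1]. -/
open scoped ENNReal ComplexConjugate Classical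

variable {V : Type*}

section Aux

open scoped NNReal

lemma two_toReal : (2 : ℝ≥0∞).toReal = 2 := by norm_num

lemma l2_summable (f : l2 ℕ) : Summable fun n => ‖(f : ℕ → ℂ) n‖ ^ (2:ℝ) := by
  have := (lp.memℓp f).summable (p := 2) (by norm_num)
  simpa [two_toReal] using this

lemma l2_norm_sq_s17 (f : l2 ℕ) : ‖f‖ ^ (2:ℝ) = ∑' n, ‖(f : ℕ → ℂ) n‖ ^ (2:ℝ) := by
  have := lp.norm_rpow_eq_tsum (p := 2) (by norm_num) f
  simpa [two_toReal] using this

lemma memlp_of_bound (f : l2 ℕ) (g : ℕ → ℂ) (h0 : g 0 = 0)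
    (h : ∀ n, ‖g (n+1)‖ ≤ ‖(f : ℕ → ℂ) n‖) : Memℓp g 2 := by
  apply memℓp_gen
  rw [two_toReal]
  have h1 : Summable fun n => ‖g (n+1)‖ ^ (2:ℝ) := by
    refine Summable.of_nonneg_of_le (fun n => Real.rpow_nonneg (norm_nonneg _) _)
      (fun n => Real.rpow_le_rpow (norm_nonneg _) (h n) (by norm_num)) (l2_summable f)
  exact (summable_nat_add_iff 1).mp h1

lemma l2_norm_le_shifted (g f : l2 ℕ) (h0 : (g : ℕ → ℂ) 0 = 0)
    (h : ∀ n, ‖(g : ℕ → ℂ) (n+1)‖ ≤ ‖(f : ℕ → ℂ) n‖) : ‖g‖ ≤ ‖f‖ := by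
  rw [← Real.rpow_le_rpow_iff (lp.norm_nonneg' g) (lp.norm_nonneg' f) (by norm_num : (0:ℝ) < 2),
    l2_norm_sq_s17, l2_norm_sq_s17]
  have hg := l2_summable g
  calc ∑' n, ‖(g : ℕ → ℂ) n‖ ^ (2:ℝ)
      = ‖(g : ℕ → ℂ) 0‖ ^ (2:ℝ) + ∑' n, ‖(g : ℕ → ℂ) (n+1)‖ ^ (2:ℝ) := hg.tsum_eq_zero_add
    _ = ∑' n, ‖(g : ℕ → ℂ) (n+1)‖ ^ (2:ℝ) := by
        rw [h0]; simp [Real.zero_rpow (by norm_num : (2:ℝ) ≠ 0)]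
    _ ≤ ∑' n, ‖(f : ℕ → ℂ) n‖ ^ (2:ℝ) := by
        refine Summable.tsum_le_tsum (fun n => Real.rpow_le_rpow (norm_nonneg _) (h n) (by norm_num))
          ((summable_nat_add_iff 1).mpr hg) (l2_summable f)

lemma l2_norm_congr (g f : l2 ℕ) (h : ∀ n, ‖(g : ℕ → ℂ) n‖ = ‖(f : ℕ → ℂ) n‖) : ‖g‖ = ‖f‖ := by
  refine Real.rpow_left_injOn (x := 2) (by norm_num) (lp.norm_nonneg' g) (lp.norm_nonneg' f) ?_
  simp only [Set.mem_setOf_eq]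
  rw [l2_norm_sq_s17, l2_norm_sq_s17]
  exact tsum_congr fun n => by rw [h n]

lemma memlp_diag (c : ℕ → ℂ) (hc : ∀ n, ‖c n‖ ≤ 1) (f : l2 ℕ) :
    Memℓp (fun n => c n * (f : ℕ → ℂ) n) 2 := by
  apply memℓp_gen
  rw [two_toReal]
  refine Summable.of_nonneg_of_le (fun n => Real.rpow_nonneg (norm_nonneg _) _)
    (fun n => Real.rpow_le_rpow (norm_nonneg _) ?_ (by norm_num)) (l2_summable f)
  rw [norm_mul]
  calc ‖c n‖ * ‖(f : ℕ → ℂ) n‖ ≤ 1 * ‖(f : ℕ → ℂ) n‖ :=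
        mul_le_mul_of_nonneg_right (hc n) (norm_nonneg _)
    _ = ‖(f : ℕ → ℂ) n‖ := one_mul _

/-- diagonal multiplication operator on `ℓ²(ℕ)` -/
noncomputable def diagL (c : ℕ → ℂ) (hc : ∀ n, ‖c n‖ ≤ 1) : l2 ℕ →ₗ[ℂ] l2 ℕ where
  toFun f := ⟨fun n => c n * (f : ℕ → ℂ) n, memlp_diag c hc f⟩
  map_add' f g := by
    apply lp.ext; funext n
    simp only [lp.coeFn_add, Pi.add_apply]
    ring
  map_smul' a f := by
    apply lp.ext; funext n
    simp only [lp.coeFn_smul, Pi.smul_apply, smul_eq_mul, RingHom.id_apply]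
    ring

@[simp] lemma diagL_apply (c : ℕ → ℂ) (hc : ∀ n, ‖c n‖ ≤ 1) (f : l2 ℕ) (n : ℕ) :
    (diagL c hc f : ℕ → ℂ) n = c n * (f : ℕ → ℂ) n := rfl

/-- diagonal multiplication by a unimodular sequence, as a unitary on `ℓ²(ℕ)` -/
noncomputable def diagE (c : ℕ → ℂ) (hc : ∀ n, ‖c n‖ = 1) : l2 ℕ ≃ₗᵢ[ℂ] l2 ℕ where
  toLinearEquiv := LinearEquiv.ofLinear
    (diagL c (fun n => (hc n).le))
    (diagL (fun n => (c n)⁻¹) (fun n => by rw [norm_inv, hc n]; norm_num))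
    (by
      apply LinearMap.ext; intro f
      apply lp.ext; funext n
      have hne : c n ≠ 0 := by
        intro h; have := hc n; rw [h] at this; simp at this
      simp only [LinearMap.comp_apply, diagL_apply, LinearMap.id_apply]
      field_simp)
    (by
      apply LinearMap.ext; intro f
      apply lp.ext; funext n
      have hne : c n ≠ 0 := by
        intro h; have := hc n; rw [h] at this; simp at this
      simp only [LinearMap.comp_apply, diagL_apply, LinearMap.id_apply]
      field_simp)
  norm_map' f := by
    refine l2_norm_congr _ _ fun n => ?_
    show ‖c n * (f : ℕ → ℂ) n‖ = _
    rw [norm_mul, hc n, one_mul]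

@[simp] lemma diagE_apply (c : ℕ → ℂ) (hc : ∀ n, ‖c n‖ = 1) (f : l2 ℕ) (n : ℕ) :
    (diagE c hc f : ℕ → ℂ) n = c n * (f : ℕ → ℂ) n := rfl

/-- the conjugating unimodular sequence -/
noncomputable def cseq (lam : ℕ → ℂ) : ℕ → ℂ
  | 0 => 1
  | n + 1 => (if n = 0 then ((‖lam 1‖ : ℝ) : ℂ) else 1) * cseq lam n / lam (n + 1)

end Aux



/-- a nonzero subnormal weighted shift on `ℤ₊` with nonzero weights whose
normal extension is `U ⊕ 0` with `U` unitarily equivalent to the bilateral shift is,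
after restriction to the closure of its range, an isometry; `|λ_n| = 1` for `n ≥ 2`,
`|λ_1| ≤ 1`, and `S_λ` is unitarily equivalent to the unilateral weighted shift with
weights `(ϑ, 1, 1, …)`, `ϑ ∈ (0,1]`. -/
theorem subnormal_shift_on_nat_structure
    {K : Type*} [NormedAddCommGroup K] [InnerProductSpace ℂ K] [CompleteSpace K]
    (T : DirectedTree ℕ) (hE : ∀ a b : ℕ, T.E a b ↔ b = a + 1)
    (lam : ℕ → ℂ) (hlam : ∀ n : ℕ, 1 ≤ n → lam n ≠ 0)
    (hnz : ∃ f : (shift T lam).domain, shift T lam f ≠ 0)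
    (J : l2 ℕ →ₗᵢ[ℂ] K) (N : K →L[ℂ] K) (hNnormal : IsStarNormal N)
    (hext : ∀ f : (shift T lam).domain, N (J (f : l2 ℕ)) = J (shift T lam f))
    (K₀ : Submodule ℂ K) (hK₀ : IsClosed (K₀ : Set K))
    (U : K₀ ≃ₗᵢ[ℂ] K₀)
    (hNU : ∀ x : K₀, N (x : K) = ((U x : K₀) : K))
    (hN0 : ∀ y ∈ K₀ᗮ, N y = 0)
    (hbil : ∃ Wiso : K₀ ≃ₗᵢ[ℂ] l2 ℤ,
      ∀ (x : K₀) (n : ℤ), (Wiso (U x) : ℤ → ℂ) n = (Wiso x : ℤ → ℂ) (n - 1)) :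
    (∀ f : (shift T lam).domain,
      (f : l2 ℕ) ∈ closure (Set.range fun g : (shift T lam).domain =>
          (shift T lam g : l2 ℕ)) →
        ‖shift T lam f‖ = ‖(f : l2 ℕ)‖) ∧
    (∀ n : ℕ, 2 ≤ n → ‖lam n‖ = 1) ∧
    ‖lam 1‖ ≤ 1 ∧
    ∃ ϑ : ℝ, 0 < ϑ ∧ ϑ ≤ 1 ∧
      (shift T lam).domain = ⊤ ∧
      ∃ Sb : l2 ℕ →L[ℂ] l2 ℕ,
        (∀ f : (shift T lam).domain, Sb (f : l2 ℕ) = shift T lam f) ∧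
        ∃ Wu : l2 ℕ ≃ₗᵢ[ℂ] l2 ℕ,
          ∀ f : l2 ℕ,
            (Wu (Sb f) : ℕ → ℂ) 0 = 0 ∧
            ∀ n : ℕ, (Wu (Sb f) : ℕ → ℂ) (n + 1) =
              (if n = 0 then (ϑ : ℂ) else 1) * (Wu f : ℕ → ℂ) n := by
    classical
  -- basic tree facts
  have hnp0 : ¬ T.HasParent 0 := by
    rintro ⟨u, hu⟩; rw [hE] at hu; omega
  have hhp : ∀ n : ℕ, T.HasParent (n+1) := fun n => ⟨n, (hE n (n+1)).2 rfl⟩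
  have hpar : ∀ n : ℕ, T.par (n+1) = n := by
    intro n
    have h := T.par_spec (hhp n)
    rw [hE] at h; omega
  have hlm0 : ∀ f : ℕ → ℂ, lamMap T lam f 0 = 0 := by
    intro f; simp [lamMap, hnp0]
  have hlmS : ∀ (f : ℕ → ℂ) (n : ℕ), lamMap T lam f (n+1) = lam (n+1) * f n := by
    intro f n; simp [lamMap, hhp n, hpar n]
  have hco : ∀ f : (shift T lam).domain,
      ((shift T lam f : l2 ℕ) : ℕ → ℂ) = lamMap T lam ⇑(f : l2 ℕ) := fun f => rfl
  -- evec n and the shift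
  have hSe : ∀ n : ℕ, lamMap T lam ⇑(evec n : l2 ℕ) = ⇑(lam (n+1) • evec (n+1) : l2 ℕ) := by
    intro n; funext v
    match v with
    | 0 =>
      rw [hlm0]
      have h1 : (0:ℕ) ≠ n+1 := by omega
      simp [evec, lp.coeFn_smul, lp.single_apply, h1]
    | (m+1) =>
      rw [hlmS]
      by_cases h : m = n
      · subst h
        simp [evec, lp.coeFn_smul, lp.single_apply]
      · have h2 : m+1 ≠ n+1 := by omega
        simp [evec, lp.coeFn_smul, lp.single_apply, h, h2]
  have hdom : ∀ n : ℕ, (evec n : l2 ℕ) ∈ (shift T lam).domain := by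
    intro n
    show Memℓp (lamMap T lam ⇑(evec n : l2 ℕ)) 2
    rw [hSe n]
    exact lp.memℓp _
  have hSe' : ∀ n : ℕ, (shift T lam ⟨evec n, hdom n⟩ : l2 ℕ) = lam (n+1) • evec (n+1) := by
    intro n
    apply lp.ext
    rw [hco]
    exact hSe n
  have hevec_norm : ∀ n : ℕ, ‖(evec n : l2 ℕ)‖ = 1 := by
    intro n
    rw [show (1:ℝ) = ‖(1:ℂ)‖ by simp, evec]
    convert lp.norm_single (p := 2) (E := fun _ : ℕ => ℂ) (by norm_num) n (1:ℂ)
  have hSen : ∀ n : ℕ, ‖shift T lam ⟨evec n, hdom n⟩‖ = ‖lam (n+1)‖ := by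
    intro n
    rw [show ‖shift T lam ⟨evec n, hdom n⟩‖ = ‖(shift T lam ⟨evec n, hdom n⟩ : l2 ℕ)‖ from rfl,
      hSe' n, norm_smul, hevec_norm, mul_one]
  -- the normal extension side
  haveI : CompleteSpace K₀ := hK₀.completeSpace_coe
  have hNK0 : ∀ x : K, N x ∈ K₀ := by
    intro x
    have h2 : N (x - ((K₀.orthogonalProjectionOnto x : K₀) : K)) = 0 :=
      hN0 _ (K₀.sub_starProjection_mem_orthogonal x)
    have h3 : N x = N ((K₀.orthogonalProjectionOnto x : K₀) : K) := by
      conv_lhs => rw [show x = ((K₀.orthogonalProjectionOnto x : K₀) : K)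
        + (x - ((K₀.orthogonalProjectionOnto x : K₀) : K)) by abel]
      rw [map_add, h2, add_zero]
    rw [h3, hNU]
    exact Submodule.coe_mem _
  have hNnorm_mem : ∀ x : K, x ∈ K₀ → ‖N x‖ = ‖x‖ := by
    intro x hx
    rw [show x = ((⟨x, hx⟩ : K₀) : K) from rfl, hNU]
    exact U.norm_map _
  have hNle : ∀ x : K, ‖N x‖ ≤ ‖x‖ := by
    intro x
    have h2 : N (x - ((K₀.orthogonalProjectionOnto x : K₀) : K)) = 0 :=
      hN0 _ (K₀.sub_starProjection_mem_orthogonal x)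
    have h3 : N x = N ((K₀.orthogonalProjectionOnto x : K₀) : K) := by
      conv_lhs => rw [show x = ((K₀.orthogonalProjectionOnto x : K₀) : K)
        + (x - ((K₀.orthogonalProjectionOnto x : K₀) : K)) by abel]
      rw [map_add, h2, add_zero]
    rw [h3, hNnorm_mem _ (Submodule.coe_mem _)]
    calc ‖((K₀.orthogonalProjectionOnto x : K₀) : K)‖ = ‖K₀.orthogonalProjectionOnto x‖ := rfl
      _ ≤ ‖K₀.orthogonalProjectionOnto‖ * ‖x‖ := (K₀.orthogonalProjectionOnto).le_opNorm x
      _ ≤ 1 * ‖x‖ := mul_le_mul_of_nonneg_right (Submodule.orthogonalProjectionOnto_norm_le K₀) (norm_nonneg x)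
      _ = ‖x‖ := one_mul _
  have hSnormJ : ∀ f : (shift T lam).domain, ‖shift T lam f‖ = ‖N (J (f : l2 ℕ))‖ := by
    intro f
    rw [hext f, J.norm_map]
  have hJS_mem : ∀ f : (shift T lam).domain, J (shift T lam f) ∈ K₀ := by
    intro f; rw [← hext f]; exact hNK0 _
  have hJe_mem : ∀ n : ℕ, J (evec (n+1) : l2 ℕ) ∈ K₀ := by
    intro n
    have h := hJS_mem ⟨evec n, hdom n⟩
    rw [hSe' n, map_smul] at h
    have h2 := K₀.smul_mem (lam (n+1))⁻¹ h
    rwa [inv_smul_smul₀ (hlam (n+1) (by omega))] at h2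
  have hlam_ge2 : ∀ n : ℕ, 2 ≤ n → ‖lam n‖ = 1 := by
    intro n hn
    obtain ⟨m, rfl⟩ : ∃ m, n = m + 2 := ⟨n - 2, by omega⟩
    have h2 : ‖shift T lam ⟨evec (m+1), hdom (m+1)⟩‖ = 1 := by
      rw [hSnormJ, hNnorm_mem _ (hJe_mem m), J.norm_map, hevec_norm]
    rw [← hSen (m+1), h2]
  have hlam1_le : ‖lam 1‖ ≤ 1 := by
    rw [← hSen 0]
    rw [hSnormJ]
    calc ‖N (J (evec 0 : l2 ℕ))‖ ≤ ‖J (evec 0 : l2 ℕ)‖ := hNle _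
      _ = 1 := by rw [J.norm_map, hevec_norm]
  refine ⟨?_, hlam_ge2, hlam1_le, ?_⟩
  · intro f hf
    have hJf : J (f : l2 ℕ) ∈ K₀ := by
      have hmaps : Set.MapsTo J
          (Set.range fun g : (shift T lam).domain => (shift T lam g : l2 ℕ))
          (K₀ : Set K) := by
        rintro _ ⟨g, rfl⟩; exact hJS_mem g
      have h := map_mem_closure J.continuous hf hmaps
      rwa [hK₀.closure_eq] at h
    rw [hSnormJ, hNnorm_mem _ hJf, J.norm_map]
  · -- the structure part
    have hwt : ∀ n : ℕ, ‖lam (n+1)‖ ≤ 1 := by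
      intro n
      match n with
      | 0 => exact hlam1_le
      | (m+1) => exact le_of_eq (hlam_ge2 (m+2) (by omega))
    have hbound : ∀ (f : l2 ℕ) (n : ℕ),
        ‖lamMap T lam (⇑f) (n+1)‖ ≤ ‖(f : ℕ → ℂ) n‖ := by
      intro f n
      rw [hlmS, norm_mul]
      have h1 : ‖lam (n+1)‖ ≤ 1 := by exact hwt n
      calc ‖lam (n+1)‖ * ‖(f : ℕ → ℂ) n‖ ≤ 1 * ‖(f : ℕ → ℂ) n‖ :=
            mul_le_mul_of_nonneg_right h1 (norm_nonneg _)
        _ = ‖(f : ℕ → ℂ) n‖ := one_mul _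
    have hmem : ∀ f : l2 ℕ, Memℓp (lamMap T lam ⇑f) 2 := fun f =>
      memlp_of_bound f _ (hlm0 _) (hbound f)
    have hdomtop : (shift T lam).domain = ⊤ := by
      rw [eq_top_iff]
      intro f _
      exact hmem f
    set Smap : l2 ℕ →ₗ[ℂ] l2 ℕ :=
      { toFun := fun f => (⟨lamMap T lam ⇑f, hmem f⟩ : l2 ℕ)
        map_add' := by
          intro f g
          apply lp.ext
          simp only [lp.coeFn_add]
          exact lamMap_add T lam _ _
        map_smul' := by
          intro c f
          apply lp.ext
          simp only [lp.coeFn_smul, RingHom.id_apply]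
          exact lamMap_smul T lam _ _ } with hSmap
    have hSmap_coe : ∀ (f : l2 ℕ), ((Smap f : l2 ℕ) : ℕ → ℂ) = lamMap T lam ⇑f :=
      fun f => rfl
    have hSbound : ∀ f : l2 ℕ, ‖Smap f‖ ≤ 1 * ‖f‖ := by
      intro f
      rw [one_mul]
      refine l2_norm_le_shifted _ f ?_ ?_
      · rw [hSmap_coe, hlm0]
      · intro n
        rw [hSmap_coe]
        exact hbound f n
    refine ⟨‖lam 1‖, norm_pos_iff.mpr (hlam 1 le_rfl), hlam1_le, hdomtop,
      Smap.mkContinuous 1 hSbound, ?_, ?_⟩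
    · intro f
      apply lp.ext
      rfl
    · have hc1 : ∀ n, ‖cseq lam n‖ = 1 := by
        intro n
        induction n with
        | zero => simp [cseq]
        | succ n ih =>
          simp only [cseq]
          rw [norm_div, norm_mul, ih, mul_one]
          match n with
          | 0 =>
            rw [if_pos rfl, Complex.norm_real, Real.norm_eq_abs,
              abs_of_nonneg (norm_nonneg _)]
            exact div_self (ne_of_gt (norm_pos_iff.mpr (hlam 1 le_rfl)))
          | (m+1) =>
            rw [if_neg (by omega), norm_one,
              hlam_ge2 (m+2) (by omega)]
            norm_num
      refine ⟨diagE (cseq lam) hc1, ?_⟩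
      intro f
      constructor
      · show cseq lam 0 * lamMap T lam (⇑f) 0 = 0
        rw [hlm0, mul_zero]
      · intro n
        show cseq lam (n+1) * lamMap T lam (⇑f) (n+1)
          = (if n = 0 then ((‖lam 1‖ : ℝ) : ℂ) else 1) * (cseq lam n * ⇑f n)
        rw [hlmS]
        simp only [cseq]
        have hne : lam (n+1) ≠ 0 := hlam (n+1) (by omega)
        field_simp
end

section
/- Let T̂ = (V̂, Ê) be the directed tree with V̂ = {ω} ∪ ℤ (ω ∉ ℤ) and Ê = {(0,ω)} ∪ {(n,n+1) : n ∈ ℤ}, and let N be the weighted shift on T̂ with weights λ̂_ω = 0 and λ̂_n = 1 for n ∈ ℤ. Fix ϑ ∈ (0,1] and define ẽ_0 = √(1−ϑ²)·ê_ω + ϑ·ê_0 and ẽ_n = ê_n for n ≥ 1, and let H be the closed linear span of {ẽ_n}_{n≥0}. Then N is a bounded normal operator, {ẽ_n}_{n≥0} is an orthonormal system, N(H) ⊆ H, N ẽ_0 = ϑ ẽ_1, N ẽ_n = ẽ_{n+1} for n ≥ 1, and N|_H is unitarily equivalent to the unilateral weighted shift on ℓ²(ℤ₊) with weights (ϑ,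 1, 1, 1, …). In particular, this weighted shift with weights (ϑ,1,1,…) is subnormal with a normal extension that is a weighted shift on a directed tree. -/
open scoped ENNReal ComplexConjugate Classical

variable {V : Type*}

namespace ModelAux

local notation "⟪" x ", " y "⟫" => @inner ℂ _ _ x y

noncomputable def Nfun (f : Option ℤ → ℂ) : Option ℤ → ℂ :=
  fun v => Option.elim v 0 (fun m => f (some (m - 1)))

noncomputable def Mfun (f : Option ℤ → ℂ) : Option ℤ → ℂ :=
  fun v => Option.elim v 0 (fun m => f (some (m + 1)))

lemma summable_aux {f : Option ℤ → ℂ} (hf : Memℓp f 2) (σ : ℤ → ℤ)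
    (hσ : Function.Injective σ) :
    Summable (fun v : Option ℤ =>
      ‖(Option.elim v 0 (fun m => f (some (σ m))) : ℂ)‖ ^ (2 : ℝ≥0∞).toReal) := by
  have h2 : (0:ℝ) < (2 : ℝ≥0∞).toReal := by norm_num
  have hs : Summable (fun v : Option ℤ => ‖f v‖ ^ (2 : ℝ≥0∞).toReal) := hf.summable h2
  have hcomp : Summable (fun m : ℤ =>
      ‖f (some (σ m))‖ ^ (2 : ℝ≥0∞).toReal) := by
    have : Function.Injective (fun m : ℤ => (some (σ m) : Option ℤ)) :=
      fun a b h => hσ (Option.some_injective _ h)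
    exact hs.comp_injective this
  refine (Function.Injective.summable_iff (Option.some_injective ℤ) ?_).mp ?_
  · intro v hv
    rcases v with _ | m
    · simp [Real.zero_rpow h2.ne']
    · exact absurd ⟨m, rfl⟩ hv
  · exact hcomp

lemma memNfun {f : Option ℤ → ℂ} (hf : Memℓp f 2) : Memℓp (Nfun f) 2 :=
  memℓp_gen (summable_aux hf (fun m => m - 1) (fun a b h => by simpa using h))

lemma memMfun {f : Option ℤ → ℂ} (hf : Memℓp f 2) : Memℓp (Mfun f) 2 :=
  memℓp_gen (summable_aux hf (fun m => m + 1) (fun a b h => by simpa using h))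


lemma tsum_sq_le {f : Option ℤ → ℂ} (hf : Memℓp f 2) (σ : ℤ → ℤ)
    (hσ : Function.Injective σ) :
    ∑' v : Option ℤ, ‖(Option.elim v 0 (fun m => f (some (σ m))) : ℂ)‖ ^ (2 : ℝ≥0∞).toReal
      ≤ ∑' v : Option ℤ, ‖f v‖ ^ (2 : ℝ≥0∞).toReal := by
  have h2 : (0:ℝ) < (2 : ℝ≥0∞).toReal := by norm_num
  have hs : Summable (fun v : Option ℤ => ‖f v‖ ^ (2 : ℝ≥0∞).toReal) := hf.summable h2
  have hinj : Function.Injective (fun m : ℤ => (some (σ m) : Option ℤ)) :=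
    fun a b h => hσ (Option.some_injective _ h)
  have h1 : ∑' v : Option ℤ,
      ‖(Option.elim v 0 (fun m => f (some (σ m))) : ℂ)‖ ^ (2 : ℝ≥0∞).toReal
      = ∑' m : ℤ, ‖f (some (σ m))‖ ^ (2 : ℝ≥0∞).toReal := by
    refine (Function.Injective.tsum_eq (Option.some_injective ℤ) ?_).symm
    intro v hv
    rcases v with _ | m
    · exfalso; apply hv; simp [Function.support, Real.zero_rpow h2.ne']
    · exact ⟨m, rfl⟩
  rw [h1]
  exact tsum_comp_le_tsum_of_inj hs (fun a => Real.rpow_nonneg (norm_nonneg _) _) hinj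

lemma Nfun_add (f g : Option ℤ → ℂ) : Nfun (f + g) = Nfun f + Nfun g := by
  funext v; rcases v with _ | m <;> simp [Nfun]

lemma Nfun_smul (c : ℂ) (f : Option ℤ → ℂ) : Nfun (c • f) = c • Nfun f := by
  funext v; rcases v with _ | m <;> simp [Nfun]

lemma Mfun_add (f g : Option ℤ → ℂ) : Mfun (f + g) = Mfun f + Mfun g := by
  funext v; rcases v with _ | m <;> simp [Mfun]

lemma Mfun_smul (c : ℂ) (f : Option ℤ → ℂ) : Mfun (c • f) = c • Mfun f := by
  funext v; rcases v with _ | m <;> simp [Mfun]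

noncomputable def Nlin : l2 (Option ℤ) →ₗ[ℂ] l2 (Option ℤ) where
  toFun f := ⟨Nfun ⇑f, memNfun (lp.memℓp f)⟩
  map_add' f g := lp.ext ((congrArg Nfun (lp.coeFn_add f g)).trans (Nfun_add _ _))
  map_smul' c f := lp.ext ((congrArg Nfun (lp.coeFn_smul c f)).trans (Nfun_smul _ _))

noncomputable def Mlin : l2 (Option ℤ) →ₗ[ℂ] l2 (Option ℤ) where
  toFun f := ⟨Mfun ⇑f, memMfun (lp.memℓp f)⟩
  map_add' f g := lp.ext ((congrArg Mfun (lp.coeFn_add f g)).trans (Mfun_add _ _))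
  map_smul' c f := lp.ext ((congrArg Mfun (lp.coeFn_smul c f)).trans (Mfun_smul _ _))

lemma norm_le_aux (A : l2 (Option ℤ) →ₗ[ℂ] l2 (Option ℤ)) (σ : ℤ → ℤ)
    (hσ : Function.Injective σ)
    (hA : ∀ f : l2 (Option ℤ), (A f : Option ℤ → ℂ)
      = fun v => Option.elim v 0 (fun m => f (some (σ m)))) (f : l2 (Option ℤ)) :
    ‖A f‖ ≤ 1 * ‖f‖ := by
  rw [one_mul]
  have h2 : (0:ℝ) < (2 : ℝ≥0∞).toReal := by norm_num
  have e1 := lp.norm_rpow_eq_tsum h2 (A f)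
  have e2 := lp.norm_rpow_eq_tsum h2 f
  have key : ‖A f‖ ^ (2 : ℝ≥0∞).toReal ≤ ‖f‖ ^ (2 : ℝ≥0∞).toReal := by
    rw [e1, e2]
    calc ∑' v, ‖(A f : Option ℤ → ℂ) v‖ ^ (2 : ℝ≥0∞).toReal
        = ∑' v : Option ℤ,
          ‖(Option.elim v 0 (fun m => f (some (σ m))) : ℂ)‖ ^ (2 : ℝ≥0∞).toReal := by
          rw [hA f]
      _ ≤ _ := tsum_sq_le (lp.memℓp f) σ hσ
  have ht : (2 : ℝ≥0∞).toReal = ((2:ℕ):ℝ) := by norm_num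
  rw [ht, Real.rpow_natCast, Real.rpow_natCast] at key
  exact (pow_le_pow_iff_left₀ (norm_nonneg _) (norm_nonneg _) (by norm_num)).mp key

noncomputable def Nop : l2 (Option ℤ) →L[ℂ] l2 (Option ℤ) :=
  Nlin.mkContinuous 1 (norm_le_aux Nlin (fun m => m - 1)
    (fun a b h => by simpa using h) (fun f => rfl))

noncomputable def Mop : l2 (Option ℤ) →L[ℂ] l2 (Option ℤ) :=
  Mlin.mkContinuous 1 (norm_le_aux Mlin (fun m => m + 1)
    (fun a b h => by simpa using h) (fun f => rfl))

@[simp] lemma Nop_apply (f : l2 (Option ℤ)) : (Nop f : Option ℤ → ℂ) = Nfun ⇑f := rfl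
@[simp] lemma Mop_apply (f : l2 (Option ℤ)) : (Mop f : Option ℤ → ℂ) = Mfun ⇑f := rfl


lemma tsum_option {g : Option ℤ → ℂ} (hg : g none = 0) :
    ∑' v : Option ℤ, g v = ∑' m : ℤ, g (some m) := by
  refine (Function.Injective.tsum_eq (Option.some_injective ℤ) ?_).symm
  intro v hv
  rcases v with _ | m
  · exact absurd hg hv
  · exact ⟨m, rfl⟩

lemma adjoint_Nop : ContinuousLinearMap.adjoint Nop = Mop := by
  symm
  rw [ContinuousLinearMap.eq_adjoint_iff]
  intro x y
  have lhs : (inner ℂ (Mop x) y : ℂ) = ∑' m : ℤ, conj (x (some (m + 1))) * y (some m) := by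
    rw [lp.inner_eq_tsum]
    rw [tsum_option (by simp [Mfun])]
    simp [Mfun, RCLike.inner_apply, mul_comm]
  have rhs : (inner ℂ x (Nop y) : ℂ) = ∑' m : ℤ, conj (x (some m)) * y (some (m - 1)) := by
    rw [lp.inner_eq_tsum]
    rw [tsum_option (by simp [Nfun])]
    simp [Nfun, RCLike.inner_apply, mul_comm]
  rw [lhs, rhs]
  have h := (Equiv.addRight (1:ℤ)).tsum_eq
    (fun m => conj (x (some m)) * y (some (m - 1)))
  simp only [Equiv.coe_addRight] at h
  rw [← h]
  exact tsum_congr (fun m => by norm_num)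

lemma normal_Nop : IsStarNormal Nop := by
  constructor
  rw [ContinuousLinearMap.star_eq_adjoint, adjoint_Nop]
  show Mop * Nop = Nop * Mop
  refine ContinuousLinearMap.ext fun f => lp.ext (funext fun v => ?_)
  rcases v with _ | m <;>
    simp [ContinuousLinearMap.mul_apply, Nfun, Mfun]


lemma evec_apply {V : Type*} (u w : V) :
    (evec u : l2 V) w = if w = u then 1 else 0 := by
  rw [evec, lp.single_apply]
  split_ifs with h
  · rcases h; simp
  · simp [h]

lemma inner_evec {V : Type*} (u : V) (f : l2 V) :
    ⟪(evec u : l2 V), f⟫ = f u := by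
  rw [evec, lp.inner_single_left]
  simp [RCLike.inner_apply]

lemma Nop_evec_none : Nop (evec (none : Option ℤ)) = 0 := by
  refine lp.ext (funext fun v => ?_)
  rcases v with _ | m
  · rfl
  · show Nfun (evec (none : Option ℤ)) (some m) = _
    simp [Nfun, evec_apply]

lemma Nop_evec_some (k : ℤ) : Nop (evec (some k)) = evec (some (k + 1)) := by
  refine lp.ext (funext fun v => ?_)
  rcases v with _ | m
  · show (0 : ℂ) = _
    simp [evec_apply]
  · show Nfun (evec (some k)) (some m) = _
    show (evec (some k) : l2 (Option ℤ)) (some (m - 1)) = _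
    rw [evec_apply, evec_apply]
    by_cases h : m = k + 1
    · rw [if_pos (congrArg some (by omega : m - 1 = k)), if_pos (by rw [h])]
    · rw [if_neg (fun hc => h (by injection hc with hc; omega)),
        if_neg (fun hc => h (by injection hc with hc))]

lemma inner_closure_zero {E : Type*} [NormedAddCommGroup E] [InnerProductSpace ℂ E]
    {u : E} {s : Set E} (h : ∀ y ∈ s, ⟪u, y⟫ = 0) {x : E}
    (hx : x ∈ (Submodule.span ℂ s).topologicalClosure) : ⟪u, x⟫ = 0 := by
  set K : Submodule ℂ E := LinearMap.ker (innerSL ℂ u : E →ₗ[ℂ] ℂ) with hK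
  have hker : Submodule.span ℂ s ≤ K :=
    Submodule.span_le.mpr (fun y hy => by
      simp only [hK, SetLike.mem_coe, LinearMap.mem_ker, ContinuousLinearMap.coe_coe,
        innerSL_apply_apply]
      exact h y hy)
  have hcl : IsClosed (K : Set E) := ContinuousLinearMap.isClosed_ker (innerSL ℂ u)
  have h2 := (Submodule.span ℂ s).topologicalClosure_minimal hker hcl
  have h3 := h2 hx
  simpa only [hK, LinearMap.mem_ker, ContinuousLinearMap.coe_coe, innerSL_apply_apply] using h3

lemma total_in_closure {E : Type*} [NormedAddCommGroup E] [NormedSpace ℂ E] (v : ℕ → E)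
    (w : ℕ → (Submodule.span ℂ (Set.range v)).topologicalClosure)
    (hw : ∀ n, (w n : E) = v n) :
    ⊤ ≤ (Submodule.span ℂ (Set.range w)).topologicalClosure := by
  intro x _
  have hx : (x : E) ∈ closure (Submodule.span ℂ (Set.range v) : Set E) := x.2
  rw [← SetLike.mem_coe, Submodule.topologicalClosure_coe, closure_subtype]
  have h1 : (Submodule.span ℂ (Set.range w)).map
      (Submodule.span ℂ (Set.range v)).topologicalClosure.subtype
      = Submodule.span ℂ (Set.range v) := by
    rw [Submodule.map_span, ← Set.range_comp]
    refine congrArg _ (congrArg _ (funext fun n => ?_))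
    show ((w n : E)) = v n
    exact hw n
  have himg : (Subtype.val ''
        ((Submodule.span ℂ (Set.range w)) :
          Set (Submodule.span ℂ (Set.range v)).topologicalClosure) : Set E)
      = (Submodule.span ℂ (Set.range v) : Set E) := by
    exact ((Submodule.map_coe _ _).symm).trans (congrArg SetLike.coe h1)
  rw [himg]
  exact hx

end ModelAux


set_option maxHeartbeats 1000000 in
/-- the weighted shift `N` on the tree `ℤ` with a leaf `ω` glued at `0`
(weight `0` at `ω`, weights `1` on `ℤ`) is a bounded normal operator which, restricted to
the closed span of the vectors `ẽ_n`, is unitarily equivalent to the unilateral weighted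
shift with weights `(ϑ, 1, 1, …)`. -/
theorem model_normal_extension (ϑ : ℝ) (hϑ : ϑ ∈ Set.Ioc (0 : ℝ) 1)
    (That : DirectedTree (Option ℤ))
    (hE : ∀ a b : Option ℤ, That.E a b ↔
      (a = some 0 ∧ b = none) ∨ ∃ n : ℤ, a = some n ∧ b = some (n + 1))
    (lamHat : Option ℤ → ℂ)
    (hω : lamHat none = 0) (h1 : ∀ n : ℤ, lamHat (some n) = 1) :
    (shift That lamHat).domain = ⊤ ∧
    ∃ N : l2 (Option ℤ) →L[ℂ] l2 (Option ℤ),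
      (∀ g : (shift That lamHat).domain,
        N (g : l2 (Option ℤ)) = shift That lamHat g) ∧
      IsStarNormal N ∧
      ∀ etil : ℕ → l2 (Option ℤ),
        (etil 0 = ((Real.sqrt (1 - ϑ ^ 2) : ℝ) : ℂ) • evec (none : Option ℤ) +
            (ϑ : ℂ) • evec (some (0 : ℤ))) →
        (∀ n : ℕ, 1 ≤ n → etil n = evec (some (n : ℤ))) →
        Orthonormal ℂ etil ∧
        (∀ x ∈ (Submodule.span ℂ (Set.range etil)).topologicalClosure,
          N x ∈ (Submodule.span ℂ (Set.range etil)).topologicalClosure) ∧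
        N (etil 0) = (ϑ : ℂ) • etil 1 ∧
        (∀ n : ℕ, 1 ≤ n → N (etil n) = etil (n + 1)) ∧
        ∃ Wu : (Submodule.span ℂ (Set.range etil)).topologicalClosure ≃ₗᵢ[ℂ] l2 ℕ,
          ∀ (x : (Submodule.span ℂ (Set.range etil)).topologicalClosure)
            (hx : N (x : l2 (Option ℤ)) ∈
              (Submodule.span ℂ (Set.range etil)).topologicalClosure),
            (Wu ⟨N (x : l2 (Option ℤ)), hx⟩ : ℕ → ℂ) 0 = 0 ∧
            ∀ n : ℕ, (Wu ⟨N (x : l2 (Option ℤ)), hx⟩ : ℕ → ℂ) (n + 1) =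
              (if n = 0 then (ϑ : ℂ) else 1) * (Wu x : ℕ → ℂ) n := by
  obtain ⟨hϑ0, hϑ1⟩ := hϑ
  have hrt : Real.sqrt (1 - ϑ^2) ^ 2 = 1 - ϑ^2 := Real.sq_sqrt (by nlinarith)
  set rt := Real.sqrt (1 - ϑ^2) with hrtdef
  have hlam : ∀ f : Option ℤ → ℂ, lamMap That lamHat f = ModelAux.Nfun f := by
    intro f
    funext v
    rcases v with _ | m
    · have hp : That.HasParent none := ⟨some 0, (hE _ _).mpr (Or.inl ⟨rfl, rfl⟩)⟩
      simp [lamMap, hp, hω, ModelAux.Nfun]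
    · have hEdge : That.E (some (m - 1)) (some m) :=
        (hE _ _).mpr (Or.inr ⟨m - 1, rfl, by rw [show m - 1 + 1 = m from by omega]⟩)
      have hp : That.HasParent (some m) := ⟨_, hEdge⟩
      have hpar : That.par (some m) = some (m - 1) :=
        That.parent_unique (That.par_spec hp) hEdge
      simp [lamMap, hp, hpar, h1, ModelAux.Nfun]
  have hdom : (shift That lamHat).domain = ⊤ := by
    rw [Submodule.eq_top_iff']
    intro f
    show Memℓp (lamMap That lamHat ⇑f) 2
    rw [hlam]
    exact ModelAux.memNfun (lp.memℓp f)
  refine ⟨hdom, ModelAux.Nop, ?_, ModelAux.normal_Nop, ?_⟩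
  · intro g
    refine lp.ext ?_
    show ModelAux.Nfun ⇑(g : l2 (Option ℤ)) = lamMap That lamHat ⇑(g : l2 (Option ℤ))
    rw [hlam]
  · intro etil h0 hn
    have hev : ∀ n : ℕ, etil (n+1) = evec (some ((n:ℤ)+1)) := by
      intro n
      rw [hn (n+1) (by omega)]
      norm_num
    have hc : ∀ v, (etil 0 : Option ℤ → ℂ) v
        = Option.elim v (rt:ℂ) (fun m => if m = 0 then (ϑ:ℂ) else 0) := by
      intro v
      rw [h0]
      rcases v with _ | m
      · simp only [lp.coeFn_add, lp.coeFn_smul, Pi.add_apply, Pi.smul_apply]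
        simp [ModelAux.evec_apply]
      · simp only [lp.coeFn_add, lp.coeFn_smul, Pi.add_apply, Pi.smul_apply]
        by_cases hm : m = 0 <;>
          simp [ModelAux.evec_apply, hm]
    have hcnone : (etil 0 : Option ℤ → ℂ) none = (rt:ℂ) := by rw [hc none]; rfl
    have hc0 : (etil 0 : Option ℤ → ℂ) (some 0) = (ϑ:ℂ) := by
      rw [hc (some 0)]; simp
    have hcm : ∀ m : ℤ, m ≠ 0 → (etil 0 : Option ℤ → ℂ) (some m) = 0 := fun m hm => by
      rw [hc (some m)]; simp [hm]
    have hinner0 : ∀ f : l2 (Option ℤ),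
        (inner ℂ (etil 0) f : ℂ) = (rt:ℂ) * f none + (ϑ:ℂ) * f (some 0) := by
      intro f
      rw [h0, inner_add_left, inner_smul_left, inner_smul_left,
        ModelAux.inner_evec, ModelAux.inner_evec, Complex.conj_ofReal, Complex.conj_ofReal]
    have hinner1 : ∀ n : ℕ, ∀ f : l2 (Option ℤ),
        (inner ℂ (etil (n+1)) f : ℂ) = f (some ((n:ℤ)+1)) := by
      intro n f
      rw [hev n, ModelAux.inner_evec]
    have horth : Orthonormal ℂ etil := by
      rw [orthonormal_iff_ite]
      intro i j
      match i, j with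
      | 0, 0 =>
        rw [if_pos rfl, hinner0 (etil 0), hcnone, hc0]
        have h11 : (rt*rt + ϑ*ϑ : ℝ) = 1 := by nlinarith [hrt]
        calc (rt:ℂ)*(rt:ℂ) + (ϑ:ℂ)*(ϑ:ℂ) = ((rt*rt + ϑ*ϑ : ℝ) : ℂ) := by push_cast; ring
          _ = 1 := by rw [h11]; norm_num
      | 0, (n+1) =>
        rw [if_neg (by omega), hinner0 (etil (n+1)), hev n,
          ModelAux.evec_apply, ModelAux.evec_apply,
          if_neg (by simp), if_neg (fun hcon => by injection hcon with hcon; omega)]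
        ring
      | (m+1), 0 =>
        rw [if_neg (by omega), hinner1 m (etil 0), hcm ((m:ℤ)+1) (by omega)]
      | (m+1), (n+1) =>
        rw [hinner1 m (etil (n+1)), hev n, ModelAux.evec_apply]
        by_cases hmn : m = n
        · rw [if_pos (by rw [hmn]), if_pos (by rw [hmn])]
        · rw [if_neg (fun hcon => hmn (by injection hcon with hcon; omega)),
            if_neg (by omega)]
    have hNe0 : ModelAux.Nop (etil 0) = (ϑ:ℂ) • etil 1 := by
      rw [h0, map_add, map_smul, map_smul, ModelAux.Nop_evec_none, ModelAux.Nop_evec_some,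
        smul_zero, zero_add, hn 1 le_rfl]
      norm_num
    have hNe : ∀ n : ℕ, 1 ≤ n → ModelAux.Nop (etil n) = etil (n + 1) := by
      intro n hn1
      obtain ⟨k, rfl⟩ : ∃ k, n = k + 1 := ⟨n - 1, by omega⟩
      rw [hev k, ModelAux.Nop_evec_some, hev (k+1)]
      norm_num
    set S := Submodule.span ℂ (Set.range etil) with hSdef
    have hmaps : ∀ y ∈ S, ModelAux.Nop y ∈ S := by
      intro y hy
      induction hy using Submodule.span_induction with
      | mem y hy =>
        obtain ⟨n, rfl⟩ := hy
        match n with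
        | 0 =>
          rw [hNe0]
          exact S.smul_mem _ (Submodule.subset_span ⟨1, rfl⟩)
        | (k+1) =>
          rw [hNe (k+1) (by omega)]
          exact Submodule.subset_span ⟨k+2, rfl⟩
      | zero => simp
      | add a b _ _ ha hb => rw [map_add]; exact S.add_mem ha hb
      | smul c a _ ha => rw [map_smul]; exact S.smul_mem c ha
    have hinv : ∀ x ∈ S.topologicalClosure, ModelAux.Nop x ∈ S.topologicalClosure := by
      intro x hx
      rw [← SetLike.mem_coe, Submodule.topologicalClosure_coe] at hx ⊢
      exact map_mem_closure ModelAux.Nop.continuous hx (fun y hy => hmaps y hy)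
    have hxneg : ∀ x ∈ S.topologicalClosure, ∀ m : ℤ, m < 0 →
        (x : Option ℤ → ℂ) (some m) = 0 := by
      intro x hx m hm
      have h := ModelAux.inner_closure_zero (u := evec (some m)) (s := Set.range etil) ?_ hx
      · rwa [ModelAux.inner_evec] at h
      · rintro y ⟨n, rfl⟩
        rw [ModelAux.inner_evec]
        match n with
        | 0 =>
          rw [hcm m (by omega)]
        | (k+1) =>
          rw [hev k, ModelAux.evec_apply,
            if_neg (fun hcon => by injection hcon with hcon; omega)]
    have hx00 : ∀ x ∈ S.topologicalClosure,
        (ϑ:ℂ) * (x : Option ℤ → ℂ) none = (rt:ℂ) * (x : Option ℤ → ℂ) (some 0) := by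
      intro x hx
      have h := ModelAux.inner_closure_zero
        (u := (ϑ:ℂ) • evec (none : Option ℤ) - (rt:ℂ) • evec (some (0:ℤ)))
        (s := Set.range etil) ?_ hx
      · rw [inner_sub_left, inner_smul_left, inner_smul_left, ModelAux.inner_evec,
          ModelAux.inner_evec, Complex.conj_ofReal, Complex.conj_ofReal, sub_eq_zero] at h
        exact h
      · rintro y ⟨n, rfl⟩
        rw [inner_sub_left, inner_smul_left, inner_smul_left, ModelAux.inner_evec,
          ModelAux.inner_evec, Complex.conj_ofReal, Complex.conj_ofReal]
        match n with
        | 0 =>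
          rw [hcnone, hc0]
          ring
        | (k+1) =>
          rw [hev k, ModelAux.evec_apply, ModelAux.evec_apply,
            if_neg (by simp), if_neg (fun hcon => by injection hcon with hcon; omega)]
          ring
    haveI : CompleteSpace (S.topologicalClosure) :=
      S.isClosed_topologicalClosure.completeSpace_coe
    set etil' : ℕ → S.topologicalClosure := fun n =>
      ⟨etil n, Submodule.le_topologicalClosure S (Submodule.subset_span ⟨n, rfl⟩)⟩
      with hetil'
    have horth' : Orthonormal ℂ etil' := by
      rw [orthonormal_iff_ite] at horth ⊢
      intro i j
      rw [Submodule.coe_inner]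
      exact horth i j
    have htot : ⊤ ≤ (Submodule.span ℂ (Set.range etil')).topologicalClosure :=
      ModelAux.total_in_closure etil etil' (fun n => rfl)
    set b := HilbertBasis.mk horth' htot with hb
    have hrepr : ∀ (y : S.topologicalClosure) (n : ℕ),
        (b.repr y : ℕ → ℂ) n = (inner ℂ (etil n) (y : l2 (Option ℤ)) : ℂ) := by
      intro y n
      rw [b.repr_apply_apply]
      have hbn : b n = etil' n := by rw [hb, HilbertBasis.coe_mk]
      rw [hbn]
      rfl
    refine ⟨horth, hinv, hNe0, hNe, b.repr, ?_⟩
    intro x hx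
    have hcoe : ((⟨ModelAux.Nop (x : l2 (Option ℤ)), hx⟩ : S.topologicalClosure) :
        l2 (Option ℤ)) = ModelAux.Nop (x : l2 (Option ℤ)) := rfl
    constructor
    · rw [hrepr ⟨_, hx⟩ 0, hcoe, hinner0]
      have hnone : (ModelAux.Nop (x : l2 (Option ℤ)) : Option ℤ → ℂ) none = 0 := rfl
      have hsome : (ModelAux.Nop (x : l2 (Option ℤ)) : Option ℤ → ℂ) (some 0)
          = (x : l2 (Option ℤ)) (some (0-1)) := rfl
      rw [hnone, hsome, hxneg x x.2 (0-1) (by omega)]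
      ring
    · intro n
      rw [hrepr ⟨_, hx⟩ (n+1), hcoe, hinner1 n]
      have hsome : (ModelAux.Nop (x : l2 (Option ℤ)) : Option ℤ → ℂ) (some ((n:ℤ)+1))
          = (x : l2 (Option ℤ)) (some ((n:ℤ)+1-1)) := rfl
      rw [hsome]
      match n with
      | 0 =>
        rw [if_pos rfl, hrepr x 0, hinner0]
        have hxx := hx00 x x.2
        have hrtC : (rt:ℂ)*(rt:ℂ) = 1 - (ϑ:ℂ)*(ϑ:ℂ) := by
          have : (rt*rt : ℝ) = 1 - ϑ*ϑ := by nlinarith [hrt]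
          exact_mod_cast congrArg (fun r : ℝ => (r:ℂ)) this
        have h01 : ((0:ℕ):ℤ) + 1 - 1 = 0 := by norm_num
        rw [h01]
        linear_combination (-(rt:ℂ)) * hxx +
          (-((x : l2 (Option ℤ)) (some 0))) * hrtC
      | (k+1) =>
        rw [if_neg (by omega), hrepr x (k+1), hinner1 k, one_mul,
          show ((k+1:ℕ):ℤ) + 1 - 1 = (k:ℤ) + 1 from by push_cast; ring]
end
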